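/- Let m ≥ 1 and a_0, a_1, …, a_m ∈ L with a_m ≠ 0. For n ≥ m define Φ_n = a_0 + Σ_{j=1}^{m} a_j [n−j+1]^{q^{j−1}}[n−j+2]^{q^{j−2}}⋯[n]. If u = Σ_{n≥0} u_n t^{q^n}/D_n is a formal solution of the model equation Σ_{j=0}^{m} a_j τ^j (d^j u) = f, where f = Σ_{n≥0} φ_n t^{q^n}/D_n, then u_n Φ_n = φ_n for every n ≥ m; moreover, if limsup_{n→∞} |φ_n|^{q^{-n}} < ∞ then limsup_{n→∞} |u_n|^{q^{-n}} < ∞, i.e. every formal solution of the model equation has a positive radius of convergence whenever f does. -/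

import Mathlib

/- Context: `q = p^υ`, `L` is an algebraically closed field of characteristic `p`,
complete w.r.t. the nontrivial nonarchimedean absolute value `abv`, `x ∈ L` with
`|x| = q⁻¹`, `[n] = x^{q^n} - x`, and `D_0 = 1`, `D_i = [i]·D_{i-1}^q` are the
Carlitz factorials. -/

/-- The Carlitz bracket `[n] = x^{q^n} - x`. -/
def carlitzBr (q : ℕ) {L : Type*} [CommRing L] (x : L) (n : ℕ) : L :=
  x ^ q ^ n - x

/-- A formal series `Σ_{n≥0} c_n t^{q^n}/D_n` has a positive radius of convergence
iff `limsup_{n→∞} |c_n|^{q^{-n}} < ∞`. -/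
def HasPosRadius (q : ℕ) {L : Type*} [Field L] (abv : AbsoluteValue L ℝ)
    (c : ℕ → L) : Prop :=
  Filter.limsup (fun n => ENNReal.ofReal (abv (c n)) ^ (((q : ℝ) ^ n)⁻¹))
    Filter.atTop < ⊤

/-- Coefficientwise action of the Carlitz derivative `d` on formal series
`Σ c_n t^{q^n}/D_n`: the `n`-th coefficient of `du` is `(c_{n+1})^{1/q}`, where
`rt` is the `q`-th root map of `L`. -/
def dCoeff {L : Type*} (rt : L → L) (c : ℕ → L) : ℕ → L :=
  fun n => rt (c (n + 1))

/-- Coefficientwise action of the Frobenius `τ` on formal series: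
`τ(Σ c_n t^{q^n}/D_n) = Σ c_n^q [n+1] t^{q^{n+1}}/D_{n+1}`. -/
def tauCoeff (q : ℕ) {L : Type*} [CommRing L] (x : L) (c : ℕ → L) : ℕ → L
  | 0 => 0
  | n + 1 => c n ^ q * carlitzBr q x (n + 1)

/-- Coefficientwise action of an operator power series `A(τ) = Σ_k α_k τ^k` on a
formal series: the `l`-th coefficient of `A(τ)u` is
`Σ_{n+k=l} α_k c_n^{q^k} [n+1]^{q^{k-1}} ⋯ [n+k]` (bracket product empty for `k = 0`). -/
def opSeriesCoeff (q : ℕ) {L : Type*} [CommRing L] (x : L) (α : ℕ → L)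
    (c : ℕ → L) : ℕ → L :=
  fun l => ∑ nk ∈ Finset.HasAntidiagonal.antidiagonal l,
    α nk.2 * c nk.1 ^ q ^ nk.2 *
      ∏ s ∈ Finset.Icc 1 nk.2, carlitzBr q x (nk.1 + s) ^ q ^ (nk.2 - s)

open Finset

theorem aux_d {L : Type*} (rt : L → L) (u : ℕ → L) (j n : ℕ) :
    (dCoeff rt)^[j] u n = rt^[j] (u (n + j)) := by
  induction j generalizing u n with
  | zero => simp
  | succ j ih =>
    rw [Function.iterate_succ_apply, ih, Function.iterate_succ_apply]
    rfl

theorem aux_rt {L : Type*} [Monoid L] (q : ℕ) (rt : L → L) (hrt : ∀ e : L, rt e ^ q = e)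
    (j : ℕ) (y : L) : (rt^[j] y) ^ q ^ j = y := by
  induction j generalizing y with
  | zero => simp
  | succ j ih =>
    rw [Function.iterate_succ_apply', pow_succ', pow_mul, hrt, ih]

theorem aux_tau {L : Type*} [CommRing L] (q : ℕ) (x : L) (c : ℕ → L) (j l : ℕ) (h : j ≤ l) :
    (tauCoeff q x)^[j] c l = c (l - j) ^ q ^ j *
      ∏ s ∈ Finset.Icc 1 j, carlitzBr q x (l - j + s) ^ q ^ (j - s) := by
  induction j generalizing l with
  | zero => simp
  | succ j ih =>
    obtain ⟨l', rfl⟩ : ∃ l', l = l' + 1 := ⟨l - 1, by omega⟩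
    rw [Function.iterate_succ_apply']
    have hjl : j ≤ l' := by omega
    show ((tauCoeff q x)^[j] c l') ^ q * carlitzBr q x (l' + 1) = _
    rw [ih l' hjl, Finset.prod_Icc_succ_top (by omega : 1 ≤ j + 1)]
    rw [mul_pow, ← Finset.prod_pow]
    have h1 : l' + 1 - (j + 1) = l' - j := by omega
    have h2 : l' - j + (j + 1) = l' + 1 := by omega
    rw [h1, h2]
    have h3 : (c (l' - j) ^ q ^ j) ^ q = c (l' - j) ^ q ^ (j + 1) := by
      rw [← pow_mul, ← pow_succ]
    have h4 : ∀ s ∈ Finset.Icc 1 j, (carlitzBr q x (l' - j + s) ^ q ^ (j - s)) ^ q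
        = carlitzBr q x (l' - j + s) ^ q ^ (j + 1 - s) := by
      intro s hs
      simp only [Finset.mem_Icc] at hs
      rw [← pow_mul, ← pow_succ]
      congr 2
      omega
    rw [Finset.prod_congr rfl h4, h3]
    have h5 : j + 1 - (j + 1) = 0 := by omega
    rw [h5]
    ring

theorem aux_br {p υ q : ℕ} [Fact p.Prime] (hq : q = p ^ υ)
    {L : Type*} [CommRing L] [CharP L p] (x : L) {s j n : ℕ} (hsj : s ≤ j) (hjn : j ≤ n) :
    carlitzBr q x (n - j + s) ^ q ^ (j - s) = x ^ q ^ n - x ^ q ^ (j - s) := by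
  have : q ^ (j - s) = p ^ (υ * (j - s)) := by rw [hq, pow_mul]
  rw [carlitzBr, this, sub_pow_char_pow, ← this, ← pow_mul, ← pow_add]
  have hn : n - j + s + (j - s) = n := by omega
  rw [hn]

theorem aux_P {p υ q : ℕ} [Fact p.Prime] (hq : q = p ^ υ)
    {L : Type*} [CommRing L] [CharP L p] (x : L) {j n : ℕ} (hjn : j ≤ n) :
    ∏ s ∈ Finset.Icc 1 j, carlitzBr q x (n - j + s) ^ q ^ (j - s)
      = ∏ i ∈ Finset.range j, (x ^ q ^ n - x ^ q ^ i) := by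
  rw [Finset.prod_congr rfl (fun s hs => by
    simp only [Finset.mem_Icc] at hs
    exact aux_br hq x hs.2 hjn)]
  refine Finset.prod_bij' (fun s _ => j - s) (fun i _ => j - i) ?_ ?_ ?_ ?_ ?_
  · intro s hs; simp only [Finset.mem_Icc] at hs; simp only [Finset.mem_range]; omega
  · intro i hi; simp only [Finset.mem_range] at hi; simp only [Finset.mem_Icc]; omega
  · intro s hs; simp only [Finset.mem_Icc] at hs; show j - (j - s) = s; omega
  · intro i hi; simp only [Finset.mem_range] at hi; show j - (j - i) = i; omega
  · intro s hs; rfl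

theorem aux_part1 {L : Type*} [CommRing L] (q : ℕ) (x : L) (rt : L → L)
    (hrt : ∀ e : L, rt e ^ q = e) (m : ℕ) (a : ℕ → L) (u : ℕ → L) (n : ℕ) (hn : m ≤ n) :
    ∑ j ∈ Finset.range (m + 1), a j * ((tauCoeff q x)^[j] ((dCoeff rt)^[j] u)) n
      = u n * (a 0 + ∑ j ∈ Finset.Icc 1 m, a j *
          ∏ s ∈ Finset.Icc 1 j, carlitzBr q x (n - j + s) ^ q ^ (j - s)) := by
  have key : ∀ j ∈ Finset.range (m + 1),
      a j * ((tauCoeff q x)^[j] ((dCoeff rt)^[j] u)) n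
        = a j * (u n * ∏ s ∈ Finset.Icc 1 j, carlitzBr q x (n - j + s) ^ q ^ (j - s)) := by
    intro j hj
    simp only [Finset.mem_range] at hj
    have hjn : j ≤ n := by omega
    rw [aux_tau q x _ j n hjn, aux_d]
    have : n - j + j = n := by omega
    rw [this, aux_rt q rt hrt]
  rw [Finset.sum_congr rfl key]
  have hsplit : Finset.range (m + 1) = insert 0 (Finset.Icc 1 m) := by
    ext i; simp only [Finset.mem_range, Finset.mem_insert, Finset.mem_Icc]; omega
  rw [hsplit, Finset.sum_insert (by simp)]
  simp only [Finset.Icc_self, Finset.Icc_eq_empty_of_lt (by omega : (1:ℕ) > 0)]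
  rw [mul_add]
  congr 1
  · simp [mul_comm]
  · rw [Finset.mul_sum]
    apply Finset.sum_congr rfl
    intro j hj
    ring

theorem aux_mprod_nonneg {α : Type*} (R : Multiset α) (f : α → ℝ)
    (h : ∀ r ∈ R, 0 ≤ f r) : 0 ≤ (R.map f).prod := by
  induction R using Multiset.induction_on with
  | empty => simp
  | cons a s ih =>
    simp only [Multiset.map_cons, Multiset.prod_cons]
    exact mul_nonneg (h a (Multiset.mem_cons_self a s))
      (ih fun r hr => h r (Multiset.mem_cons_of_mem hr))

theorem aux_mprod_pos {α : Type*} (R : Multiset α) (f : α → ℝ)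
    (h : ∀ r ∈ R, 0 < f r) : 0 < (R.map f).prod := by
  induction R using Multiset.induction_on with
  | empty => simp
  | cons a s ih =>
    simp only [Multiset.map_cons, Multiset.prod_cons]
    exact mul_pos (h a (Multiset.mem_cons_self a s))
      (ih fun r hr => h r (Multiset.mem_cons_of_mem hr))

theorem aux_mprod_le {α : Type*} (R : Multiset α) (f g : α → ℝ)
    (h : ∀ r ∈ R, 0 ≤ f r ∧ f r ≤ g r) : (R.map f).prod ≤ (R.map g).prod := by
  induction R using Multiset.induction_on with
  | empty => simp
  | cons a s ih =>
    simp only [Multiset.map_cons, Multiset.prod_cons]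
    have h1 := h a (Multiset.mem_cons_self a s)
    have h2 : ∀ r ∈ s, 0 ≤ f r ∧ f r ≤ g r := fun r hr => h r (Multiset.mem_cons_of_mem hr)
    exact mul_le_mul (h1.2) (ih h2) (aux_mprod_nonneg s f fun r hr => (h2 r hr).1)
      (le_trans h1.1 h1.2)

theorem aux_mprod_mul {α : Type*} (R : Multiset α) (f : α → ℝ) (t : ℝ) :
    (R.map (fun r => f r * t)).prod = (R.map f).prod * t ^ Multiset.card R := by
  induction R using Multiset.induction_on with
  | empty => simp
  | cons a s ih => simp only [Multiset.map_cons, Multiset.prod_cons, ih,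
      Multiset.card_cons, pow_succ]; ring

theorem aux_abv_mprod {L : Type*} [Field L] (abv : AbsoluteValue L ℝ) (M : Multiset L) :
    abv M.prod = (M.map (abv : L → ℝ)).prod := by
  induction M using Multiset.induction_on with
  | empty => simp
  | cons a s ih => simp [abv.map_mul, ih]

theorem aux_G_coeff {L : Type*} [Field L] (m : ℕ) (hm : 1 ≤ m) (a : ℕ → L) (r : ℕ → L) :
    (Polynomial.C (a 0) + ∑ j ∈ Finset.Icc 1 m, Polynomial.C (a j) *
        ∏ i ∈ Finset.range j, (Polynomial.X - Polynomial.C (r i))).coeff m = a m := by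
  have hmonic : ∀ j : ℕ, (∏ i ∈ Finset.range j, (Polynomial.X - Polynomial.C (r i))).Monic :=
    fun j => Polynomial.monic_prod_of_monic _ _ (fun i _ => Polynomial.monic_X_sub_C (r i))
  have hdeg : ∀ j : ℕ, (∏ i ∈ Finset.range j, (Polynomial.X - Polynomial.C (r i))).natDegree = j := by
    intro j
    rw [Polynomial.natDegree_prod _ _ (fun i _ => Polynomial.X_sub_C_ne_zero (r i))]
    simp [Polynomial.natDegree_X_sub_C]
  rw [Polynomial.coeff_add, Polynomial.coeff_C, if_neg (by omega : ¬ m = 0),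
    Polynomial.finset_sum_coeff, zero_add]
  rw [Finset.sum_eq_single m]
  · rw [Polynomial.coeff_C_mul]
    have := (hmonic m).coeff_natDegree
    rw [hdeg m] at this
    rw [this, mul_one]
  · intro j hj hjm
    simp only [Finset.mem_Icc] at hj
    rw [Polynomial.coeff_C_mul]
    rw [Polynomial.coeff_eq_zero_of_natDegree_lt (by rw [hdeg j]; omega), mul_zero]
  · intro hmem
    simp only [Finset.mem_Icc] at hmem
    omega

/-- for the model equation `Σ_{j=0}^m a_j τ^j (d^j u) = f` with
`a_m ≠ 0` one has `u_n Φ_n = φ_n` for `n ≥ m`, where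
`Φ_n = a_0 + Σ_{j=1}^m a_j [n-j+1]^{q^{j-1}} ⋯ [n]`; moreover if `f` has a positive
radius of convergence then so does every formal solution `u`. -/
theorem model_equation_solution
    (p υ q : ℕ) [Fact p.Prime] (hυ : 1 ≤ υ) (hq : q = p ^ υ)
    (L : Type*) [Field L] [IsAlgClosed L] [CharP L p]
    (abv : AbsoluteValue L ℝ) (hna : IsNonarchimedean (abv : L → ℝ))
    (x : L) (hx : abv x = (q : ℝ)⁻¹)
    (rt : L → L) (hrt : ∀ e : L, rt e ^ q = e)
    (m : ℕ) (hm : 1 ≤ m) (a : ℕ → L) (ham : a m ≠ 0)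
    (Φ : ℕ → L)
    (hΦ : ∀ n : ℕ, Φ n = a 0 + ∑ j ∈ Finset.Icc 1 m, a j *
        ∏ s ∈ Finset.Icc 1 j, carlitzBr q x (n - j + s) ^ q ^ (j - s))
    (φ : ℕ → L) (u : ℕ → L)
    (heq : ∀ l : ℕ,
      ∑ j ∈ Finset.range (m + 1),
        a j * ((tauCoeff q x)^[j] ((dCoeff rt)^[j] u)) l = φ l) :
    (∀ n : ℕ, m ≤ n → u n * Φ n = φ n) ∧
      (HasPosRadius q abv φ → HasPosRadius q abv u) := by
  classical
  have hp2 : 2 ≤ p := (Fact.out : p.Prime).two_le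
  have hq2 : 2 ≤ q := by
    rw [hq]
    calc 2 ≤ p := hp2
    _ ≤ p ^ υ := Nat.le_self_pow (by omega) p
  have part1 : ∀ n : ℕ, m ≤ n → u n * Φ n = φ n := by
    intro n hn
    rw [hΦ n, ← aux_part1 q x rt hrt m a u n hn]
    exact heq n
  refine ⟨part1, ?_⟩
  intro hφ
  have hqR : (1:ℝ) < (q:ℝ) := by exact_mod_cast (by omega : 1 < q)
  have hqR0 : (0:ℝ) < (q:ℝ)⁻¹ := by positivity
  have hqR1 : (q:ℝ)⁻¹ < 1 := inv_lt_one_of_one_lt₀ hqR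
  -- the polynomial G
  set G : Polynomial L := Polynomial.C (a 0) + ∑ j ∈ Finset.Icc 1 m,
      Polynomial.C (a j) * ∏ i ∈ Finset.range j,
        (Polynomial.X - Polynomial.C (x ^ q ^ i)) with hGdef
  have hcoeff : G.coeff m = a m := aux_G_coeff m hm a (fun i => x ^ q ^ i)
  have hGne : G ≠ 0 := by
    intro h
    apply ham
    rw [← hcoeff, h, Polynomial.coeff_zero]
  have hGΦ : ∀ n : ℕ, m ≤ n → Φ n = G.eval (x ^ q ^ n) := by
    intro n hn
    rw [hΦ n, hGdef]
    simp only [Polynomial.eval_add, Polynomial.eval_C, Polynomial.eval_finset_sum,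
      Polynomial.eval_mul, Polynomial.eval_prod, Polynomial.eval_sub, Polynomial.eval_X]
    congr 1
    apply Finset.sum_congr rfl
    intro j hj
    simp only [Finset.mem_Icc] at hj
    rw [aux_P hq x (le_trans hj.2 hn)]
  -- roots
  set R : Multiset L := G.roots with hRdef
  set k : ℕ := Multiset.card R with hkdef
  have hfact : G = Polynomial.C G.leadingCoeff *
      (Multiset.map (fun r => Polynomial.X - Polynomial.C r) R).prod :=
    (IsAlgClosed.splits G).eq_prod_roots
  have habs : ∀ y : L, abv (G.eval y) =
      abv G.leadingCoeff * (R.map (fun r => abv (y - r))).prod := by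
    intro y
    conv_lhs => rw [hfact]
    rw [Polynomial.eval_mul, Polynomial.eval_C, Polynomial.eval_multiset_prod,
      Multiset.map_map, abv.map_mul, aux_abv_mprod, Multiset.map_map]
    simp [Function.comp]
  have hlc0 : 0 < abv G.leadingCoeff := abv.pos (Polynomial.leadingCoeff_ne_zero.mpr hGne)
  -- the constants
  set cr : L → ℝ := fun r => if r = 0 then 1 else min (abv r) 1 with hcrdef
  have hcrpos : ∀ r : L, 0 < cr r := by
    intro r
    rw [hcrdef]
    by_cases h : r = 0
    · simp [h]
    · simp only [h, if_false]
      exact lt_min (abv.pos h) one_pos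
  have hcrle : ∀ r : L, cr r ≤ 1 := by
    intro r
    rw [hcrdef]
    by_cases h : r = 0
    · simp [h]
    · simp only [h, if_false]
      exact min_le_right _ _
  set c : ℝ := abv G.leadingCoeff * (R.map cr).prod with hcdef
  have hcpos : 0 < c := mul_pos hlc0 (aux_mprod_pos R cr (fun r _ => hcrpos r))
  -- eventual root avoidance
  have hroots_ev : ∀ᶠ n in Filter.atTop, ∀ r ∈ R, r ≠ 0 → ((q:ℝ)⁻¹) ^ q ^ n < abv r := by
    refine (Filter.eventually_all_finite (Multiset.finite_toSet R)).mpr ?_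
    intro r _
    by_cases hr0 : r = 0
    · exact Filter.Eventually.of_forall fun n h0 => absurd hr0 h0
    · have h1 : Filter.Tendsto (fun n : ℕ => ((q:ℝ)⁻¹) ^ n) Filter.atTop (nhds 0) :=
        tendsto_pow_atTop_nhds_zero_of_lt_one (le_of_lt hqR0) hqR1
      have h2 : ∀ᶠ n : ℕ in Filter.atTop, ((q:ℝ)⁻¹) ^ n < abv r :=
        h1.eventually_lt_const (abv.pos hr0)
      filter_upwards [h2] with n hn _
      refine lt_of_le_of_lt ?_ hn
      exact pow_le_pow_of_le_one (le_of_lt hqR0) (le_of_lt hqR1)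
        (le_of_lt (Nat.lt_pow_self (n := n) (a := q) (by omega)))
  -- the key eventual inequality
  have hkey : ∀ᶠ n in Filter.atTop,
      abv (u n) ≤ abv (φ n) * (c⁻¹ * (q:ℝ) ^ (k * q ^ n)) := by
    filter_upwards [hroots_ev, Filter.eventually_ge_atTop m] with n hroots hn
    set y : L := x ^ q ^ n with hydef
    set t : ℝ := ((q:ℝ)⁻¹) ^ q ^ n with htdef
    have ht0 : 0 < t := pow_pos hqR0 _
    have ht1 : t ≤ 1 := pow_le_one₀ (le_of_lt hqR0) (le_of_lt hqR1)
    have hyabs : abv y = t := by rw [hydef, map_pow, hx, htdef]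
    have hterm : ∀ r ∈ R, cr r * t ≤ abv (y - r) := by
      intro r hr
      by_cases hr0 : r = 0
      · rw [hr0, sub_zero, hyabs, hcrdef]
        simp [hr0]
      · have hlt : abv y < abv r := by rw [hyabs]; exact hroots r hr hr0
        have hmax : abv r ≤ max (abv (r - y)) (abv y) := by
          have := hna (r - y) y
          rwa [sub_add_cancel] at this
        have habv : abv r ≤ abv (y - r) := by
          rcases max_cases (abv (r - y)) (abv y) with ⟨he, _⟩ | ⟨he, _⟩
          · rw [he] at hmax; rwa [abv.map_sub]
          · rw [he] at hmax; exact absurd hmax (not_le.mpr hlt)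
        calc cr r * t ≤ cr r * 1 := by
              exact mul_le_mul_of_nonneg_left ht1 (le_of_lt (hcrpos r))
        _ = cr r := mul_one _
        _ ≤ abv r := by rw [hcrdef]; simp only [hr0, if_false]; exact min_le_left _ _
        _ ≤ abv (y - r) := habv
    have hprod : (R.map cr).prod * t ^ k ≤ (R.map (fun r => abv (y - r))).prod := by
      rw [hkdef, ← aux_mprod_mul]
      exact aux_mprod_le R _ _ (fun r hr =>
        ⟨mul_nonneg (le_of_lt (hcrpos r)) (le_of_lt ht0), hterm r hr⟩)
    have hΦlow : c * t ^ k ≤ abv (Φ n) := by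
      rw [hGΦ n hn, habs y]
      calc c * t ^ k = abv G.leadingCoeff * ((R.map cr).prod * t ^ k) := by
            rw [hcdef]; ring
      _ ≤ _ := mul_le_mul_of_nonneg_left hprod (le_of_lt hlc0)
    have hpos : 0 < c * t ^ k := mul_pos hcpos (pow_pos ht0 k)
    have hmulid : abv (u n) * abv (Φ n) = abv (φ n) := by
      rw [← abv.map_mul, part1 n hn]
    have hch : abv (u n) * (c * t ^ k) ≤ abv (φ n) := by
      calc abv (u n) * (c * t ^ k) ≤ abv (u n) * abv (Φ n) :=
            mul_le_mul_of_nonneg_left hΦlow (abv.nonneg _)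
      _ = abv (φ n) := hmulid
    have hfin : abv (u n) ≤ abv (φ n) / (c * t ^ k) := (le_div_iff₀ hpos).mpr hch
    refine le_trans hfin (le_of_eq ?_)
    have htk : t ^ k = ((q:ℝ) ^ (k * q ^ n))⁻¹ := by
      rw [htdef, ← pow_mul, inv_pow, mul_comm]
    rw [htk, div_eq_mul_inv, mul_inv, inv_inv]
  -- pass to ENNReal limsups
  unfold HasPosRadius at hφ ⊢
  set F : ℕ → ENNReal := fun n => ENNReal.ofReal (abv (φ n)) ^ (((q:ℝ) ^ n)⁻¹) with hFdef
  set M : ENNReal := Filter.limsup F Filter.atTop with hMdef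
  have hMev : ∀ᶠ n in Filter.atTop, F n < M + 1 :=
    Filter.eventually_lt_of_limsup_lt (ENNReal.lt_add_right hφ.ne one_ne_zero)
  set Cb : ENNReal := max 1 (ENNReal.ofReal c⁻¹) with hCbdef
  set Qk : ENNReal := (q:ENNReal) ^ (k:ℝ) with hQkdef
  have hQne : (q:ENNReal) ≠ ⊤ := ENNReal.natCast_ne_top q
  have hbound : ∀ᶠ n in Filter.atTop,
      ENNReal.ofReal (abv (u n)) ^ (((q:ℝ) ^ n)⁻¹) ≤ (M + 1) * Cb * Qk := by
    filter_upwards [hkey, hMev] with n hk hMn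
    have hen0 : (0:ℝ) ≤ ((q:ℝ) ^ n)⁻¹ := by positivity
    have hqpow1 : (1:ℝ) ≤ (q:ℝ) ^ n := one_le_pow₀ (le_of_lt hqR)
    have hen1 : ((q:ℝ) ^ n)⁻¹ ≤ 1 := inv_le_one_of_one_le₀ hqpow1
    have hqpne : ((q:ℝ) ^ n) ≠ 0 := by positivity
    have step1 : ENNReal.ofReal (abv (u n)) ^ (((q:ℝ) ^ n)⁻¹) ≤
        (ENNReal.ofReal (abv (φ n) * (c⁻¹ * (q:ℝ) ^ (k * q ^ n)))) ^ (((q:ℝ) ^ n)⁻¹) :=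
      ENNReal.rpow_le_rpow (ENNReal.ofReal_le_ofReal hk) hen0
    have step2 : (ENNReal.ofReal (abv (φ n) * (c⁻¹ * (q:ℝ) ^ (k * q ^ n)))) ^ (((q:ℝ) ^ n)⁻¹)
        = F n * ((ENNReal.ofReal c⁻¹) ^ (((q:ℝ) ^ n)⁻¹) *
            ((q:ENNReal) ^ (k * q ^ n)) ^ (((q:ℝ) ^ n)⁻¹)) := by
      rw [ENNReal.ofReal_mul (abv.nonneg _),
        ENNReal.ofReal_mul (inv_nonneg.mpr (le_of_lt hcpos)),
        ENNReal.ofReal_pow (by positivity), ENNReal.ofReal_natCast,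
        ENNReal.mul_rpow_of_nonneg _ _ hen0, ENNReal.mul_rpow_of_nonneg _ _ hen0, hFdef]
    have step3 : ((q:ENNReal) ^ (k * q ^ n)) ^ (((q:ℝ) ^ n)⁻¹) = Qk := by
      rw [← ENNReal.rpow_natCast (q:ENNReal) (k * q ^ n), ← ENNReal.rpow_mul, hQkdef]
      congr 1
      push_cast
      rw [mul_assoc, mul_inv_cancel₀ hqpne, mul_one]
    have step4 : (ENNReal.ofReal c⁻¹) ^ (((q:ℝ) ^ n)⁻¹) ≤ Cb := by
      by_cases hc1 : ENNReal.ofReal c⁻¹ ≤ 1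
      · exact le_trans (ENNReal.rpow_le_one hc1 hen0) (le_max_left _ _)
      · refine le_trans ?_ (le_max_right _ _)
        have := ENNReal.rpow_le_rpow_of_exponent_le (le_of_not_ge hc1) hen1
        rwa [ENNReal.rpow_one] at this
    calc ENNReal.ofReal (abv (u n)) ^ (((q:ℝ) ^ n)⁻¹)
        ≤ F n * ((ENNReal.ofReal c⁻¹) ^ (((q:ℝ) ^ n)⁻¹) *
            ((q:ENNReal) ^ (k * q ^ n)) ^ (((q:ℝ) ^ n)⁻¹)) := by rw [← step2]; exact step1
    _ ≤ (M + 1) * (Cb * Qk) := by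
        rw [step3]
        exact mul_le_mul' (le_of_lt hMn) (mul_le_mul' step4 (le_refl Qk))
    _ = (M + 1) * Cb * Qk := by rw [mul_assoc]
  calc Filter.limsup (fun n => ENNReal.ofReal (abv (u n)) ^ (((q:ℝ) ^ n)⁻¹)) Filter.atTop
      ≤ Filter.limsup (fun _ => (M + 1) * Cb * Qk) Filter.atTop :=
        Filter.limsup_le_limsup hbound
  _ = (M + 1) * Cb * Qk := Filter.limsup_const _
  _ < ⊤ := by
      refine ENNReal.mul_lt_top (ENNReal.mul_lt_top ?_ ?_) ?_
      · exact ENNReal.add_lt_top.mpr ⟨hφ, ENNReal.one_lt_top⟩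
      · exact max_lt ENNReal.one_lt_top ENNReal.ofReal_lt_top
      · exact ENNReal.rpow_lt_top_of_nonneg (Nat.cast_nonneg k) hQne
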